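/- Let ρ ∈ (0,1), P_S > 0, P_R > 0, k ∈ (0,1], σ_R² > 0, σ_D² > 0, and Ω_SR, Ω_RR, Ω_RD > 0. Let U, V, W be mutually independent real random variables, exponentially distributed with means Ω_SR, Ω_RR, Ω_RD respectively. Define Y = min{ (1−ρ)·P_S·U / ((1−ρ)·k·P_R·V + σ_R²), P_R·W/σ_D² }. Then for every x ≥ 0, P(Y ≤ x) = 1 − (P_S·Ω_SR/(P_S·Ω_SR + k·P_R·Ω_RR·x))·exp(−(σ_R²/((1−ρ)·P_S·Ω_SR) + σ_D²/(P_R·Ω_RD))·x). -/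

import Mathlib

open MeasureTheory ProbabilityTheory Real Set

lemma expMeasure_withDensity (r : ℝ) :
    expMeasure r = (volume : Measure ℝ).withDensity (exponentialPDF r) := rfl

lemma expMeasure_apply {r : ℝ} (s : Set ℝ) (hs : MeasurableSet s) :
    expMeasure r s = ∫⁻ x in s, exponentialPDF r x := by
  rw [expMeasure_withDensity, withDensity_apply _ hs]

lemma expMeasure_Ioi {r : ℝ} (hr : 0 < r) {t : ℝ} (ht : 0 ≤ t) :
    expMeasure r (Ioi t) = ENNReal.ofReal (rexp (-(r * t))) := by
  have hp := isProbabilityMeasure_expMeasure hr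
  have hIic : expMeasure r (Iic t) = ENNReal.ofReal (1 - rexp (-(r * t))) := by
    rw [expMeasure_apply _ measurableSet_Iic, lintegral_exponentialPDF_eq_antiDeriv hr,
      if_pos ht]
  rw [← compl_Iic, measure_compl measurableSet_Iic (measure_ne_top _ _), measure_univ, hIic,
    ENNReal.ofReal_sub _ (exp_pos _).le, ENNReal.ofReal_one]
  refine ENNReal.sub_sub_cancel ENNReal.one_ne_top ?_
  exact ENNReal.ofReal_le_one.mpr (exp_le_one_iff.mpr (by nlinarith))

lemma expMeasure_ae_nonneg {r : ℝ} : ∀ᵐ v ∂(expMeasure r), 0 ≤ v := by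
  rw [ae_iff]
  have h : {v : ℝ | ¬ 0 ≤ v} = Iio 0 := by
    ext v; simp only [mem_setOf_eq, not_le, mem_Iio]
  rw [h, expMeasure_apply _ measurableSet_Iio,
    lintegral_exponentialPDF_of_nonpos le_rfl]

lemma expMeasure_laplace {r c : ℝ} (hr : 0 < r) (hc : 0 ≤ c) :
    ∫⁻ v, ENNReal.ofReal (rexp (-(c * v))) ∂(expMeasure r)
      = ENNReal.ofReal (r / (r + c)) := by
  have hrc : 0 < r + c := by linarith
  have hmeaspdf : Measurable (exponentialPDF r) :=
    (measurable_exponentialPDFReal r).ennreal_ofReal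
  have hmf : Measurable fun v : ℝ => ENNReal.ofReal (rexp (-(c * v))) :=
    ((measurable_id.const_mul c).neg.exp).ennreal_ofReal
  rw [expMeasure_withDensity, lintegral_withDensity_eq_lintegral_mul _ hmeaspdf hmf]
  have hint : IntegrableOn (fun v : ℝ => r * rexp (-((r + c) * v))) (Ioi 0) := by
    have h := (exp_neg_integrableOn_Ioi 0 hrc).const_mul r
    simp only [neg_mul] at h
    exact h
  calc ∫⁻ v, (exponentialPDF r * fun v => ENNReal.ofReal (rexp (-(c * v)))) v
      = ∫⁻ v, (Ici (0:ℝ)).indicator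
          (fun v => ENNReal.ofReal (r * rexp (-((r + c) * v)))) v := by
        refine lintegral_congr fun v => ?_
        simp only [Pi.mul_apply]
        by_cases hv : 0 ≤ v
        · rw [Set.indicator_of_mem (mem_Ici.mpr hv), exponentialPDF_of_nonneg hv,
            ← ENNReal.ofReal_mul (by positivity)]
          congr 1
          rw [mul_assoc, ← exp_add]
          ring_nf
        · rw [Set.indicator_of_notMem (fun h => hv (mem_Ici.mp h)),
            exponentialPDF_of_neg (lt_of_not_ge hv), zero_mul]
    _ = ∫⁻ v in Ici (0:ℝ), ENNReal.ofReal (r * rexp (-((r + c) * v))) :=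
        lintegral_indicator measurableSet_Ici _
    _ = ∫⁻ v in Ioi (0:ℝ), ENNReal.ofReal (r * rexp (-((r + c) * v))) := by
        rw [← MeasureTheory.restrict_Ioi_eq_restrict_Ici]
    _ = ENNReal.ofReal (∫ v in Ioi (0:ℝ), r * rexp (-((r + c) * v))) :=
        (ofReal_integral_eq_lintegral_ofReal hint
          (ae_of_all _ fun v => by positivity)).symm
    _ = ENNReal.ofReal (r / (r + c)) := by
        congr 1
        rw [MeasureTheory.integral_const_mul]
        have h2 : ∫ v in Ioi (0:ℝ), rexp (-((r + c) * v)) = (r + c)⁻¹ := by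
          have h3 := integral_comp_mul_left_Ioi (fun x => rexp (-x)) 0 hrc
          simp only [mul_zero] at h3
          rw [h3, integral_exp_neg_Ioi_zero, smul_eq_mul, mul_one]
        rw [h2]
        field_simp


open MeasureTheory ProbabilityTheory Real

/-- **closed-form CDF of `Y_{H₀}`, equation (64) with φ = 0.**
With `U, V, W` mutually independent exponentials of means `Ω_SR, Ω_RR, Ω_RD`, the
end-to-end decode-and-forward SINR
`Y = min{ (1−ρ)P_S·U / ((1−ρ)k·P_R·V + σ_R²), P_R·W/σ_D² }` satisfies, for `x ≥ 0`,
`P(Y ≤ x) = 1 − (P_S·Ω_SR/(P_S·Ω_SR + k·P_R·Ω_RR·x))·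
  exp(−(σ_R²/((1−ρ)P_S·Ω_SR) + σ_D²/(P_R·Ω_RD))·x)`. -/
theorem cdf_Y_H0
    {α : Type*} [MeasureSpace α] [IsProbabilityMeasure (ℙ : Measure α)]
    (U V W : α → ℝ) (hUm : Measurable U) (hVm : Measurable V) (hWm : Measurable W)
    (ρ P_S P_R k σR2 σD2 Ω_SR Ω_RR Ω_RD : ℝ)
    (hρ : ρ ∈ Set.Ioo (0 : ℝ) 1) (hPS : 0 < P_S) (hPR : 0 < P_R)
    (hk : k ∈ Set.Ioc (0 : ℝ) 1) (hσR : 0 < σR2) (hσD : 0 < σD2)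
    (hΩSR : 0 < Ω_SR) (hΩRR : 0 < Ω_RR) (hΩRD : 0 < Ω_RD)
    (hU : Measure.map U ℙ = expMeasure (1 / Ω_SR))
    (hV : Measure.map V ℙ = expMeasure (1 / Ω_RR))
    (hW : Measure.map W ℙ = expMeasure (1 / Ω_RD))
    (hindep : iIndepFun (β := fun _ : Fin 3 => ℝ)
      ![U, V, W] ℙ)
    (Y : α → ℝ)
    (hY : ∀ ω, Y ω = min ((1 - ρ) * P_S * U ω / ((1 - ρ) * k * P_R * V ω + σR2))
        (P_R * W ω / σD2)) :
    ∀ x : ℝ, 0 ≤ x →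
      (ℙ {ω | Y ω ≤ x}).toReal
        = 1 - (P_S * Ω_SR / (P_S * Ω_SR + k * P_R * Ω_RR * x))
            * exp (-(σR2 / ((1 - ρ) * P_S * Ω_SR) + σD2 / (P_R * Ω_RD)) * x) := by

  intro x hx
  obtain ⟨hρ0, hρ1⟩ := hρ
  obtain ⟨hk0, hk1⟩ := hk
  have h1ρ : 0 < 1 - ρ := by linarith
  haveI : IsProbabilityMeasure (expMeasure (1 / Ω_SR)) :=
    isProbabilityMeasure_expMeasure (by positivity)
  haveI : IsProbabilityMeasure (expMeasure (1 / Ω_RR)) :=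
    isProbabilityMeasure_expMeasure (by positivity)
  haveI : IsProbabilityMeasure (expMeasure (1 / Ω_RD)) :=
    isProbabilityMeasure_expMeasure (by positivity)
  set cLap : ℝ := x * k * P_R / (P_S * Ω_SR) with hcLap
  have hcLap0 : 0 ≤ cLap := by positivity
  set E1 : ℝ := rexp (-(σR2 * x / ((1 - ρ) * P_S * Ω_SR))) with hE1
  set E3 : ℝ := rexp (-(1 / Ω_RD * (σD2 * x / P_R))) with hE3
  set L : ℝ := (1 / Ω_RR) / (1 / Ω_RR + cLap) with hL
  -- the event s in the (u, v) plane
  set s : Set (ℝ × ℝ) :=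
    {p : ℝ × ℝ | x < (1 - ρ) * P_S * p.1 / ((1 - ρ) * k * P_R * p.2 + σR2)} with hsdef
  have hs : MeasurableSet s := by
    apply measurableSet_lt measurable_const
    exact (measurable_fst.const_mul _).div ((measurable_snd.const_mul _).add_const σR2)
  -- complement of the event
  have hYm : Measurable Y := by
    rw [funext hY]
    exact ((hUm.const_mul _).div ((hVm.const_mul _).add_const _)).min
      ((hWm.const_mul _).div_const _)
  have hmeasY : MeasurableSet {ω | Y ω ≤ x} := measurableSet_le hYm measurable_const
  have hcompl : {ω | Y ω ≤ x}ᶜ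
      = (fun ω => (U ω, V ω)) ⁻¹' s ∩ W ⁻¹' (Ioi (σD2 * x / P_R)) := by
    ext ω
    simp only [mem_compl_iff, mem_setOf_eq, not_le, hY, lt_min_iff, mem_inter_iff,
      mem_preimage, mem_Ioi, hsdef]
    refine and_congr Iff.rfl ?_
    rw [lt_div_iff₀ hσD, div_lt_iff₀ hPR]
    constructor <;> intro h <;> nlinarith
  -- independence
  have hUV : IndepFun U V ℙ := by
    have h := hindep.indepFun (show (0 : Fin 3) ≠ 1 by decide)
    simpa using h
  have hpairW : IndepFun (fun ω => (U ω, V ω)) W ℙ := by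
    have hmeas : ∀ i, Measurable (![U, V, W] i) := by
      intro i; fin_cases i <;> simpa using by first | exact hUm | exact hVm | exact hWm
    have h := hindep.indepFun_prodMk hmeas 0 1 2 (by decide) (by decide)
    simpa using h
  -- the two factors
  have hB : ℙ (W ⁻¹' Ioi (σD2 * x / P_R)) = ENNReal.ofReal E3 := by
    rw [← Measure.map_apply hWm measurableSet_Ioi, hW,
      expMeasure_Ioi (by positivity) (by positivity)]
  have hmap : Measure.map (fun ω => (U ω, V ω)) ℙ
      = (expMeasure (1 / Ω_SR)).prod (expMeasure (1 / Ω_RR)) := by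
    rw [(indepFun_iff_map_prod_eq_prod_map_map hUm.aemeasurable hVm.aemeasurable).mp hUV,
      hU, hV]
  have hA : ℙ ((fun ω => (U ω, V ω)) ⁻¹' s)
      = ENNReal.ofReal E1 * ENNReal.ofReal L := by
    rw [← Measure.map_apply (hUm.prodMk hVm) hs, hmap, Measure.prod_apply_symm hs]
    have hinner : ∫⁻ v, (expMeasure (1 / Ω_SR)) ((fun u => (u, v)) ⁻¹' s)
          ∂(expMeasure (1 / Ω_RR))
        = ∫⁻ v, ENNReal.ofReal E1 * ENNReal.ofReal (rexp (-(cLap * v)))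
          ∂(expMeasure (1 / Ω_RR)) := by
      refine lintegral_congr_ae (expMeasure_ae_nonneg.mono fun v hv => ?_)
      dsimp only
      have hd : 0 < (1 - ρ) * k * P_R * v + σR2 := by
        nlinarith [mul_nonneg (mul_nonneg (mul_nonneg h1ρ.le hk0.le) hPR.le) hv]
      have hset : (fun u => (u, v)) ⁻¹' s
          = Ioi (x * ((1 - ρ) * k * P_R * v + σR2) / ((1 - ρ) * P_S)) := by
        ext u
        simp only [mem_preimage, hsdef, mem_setOf_eq, mem_Ioi]
        rw [lt_div_iff₀ hd, div_lt_iff₀ (show (0:ℝ) < (1 - ρ) * P_S by positivity)]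
        constructor <;> intro h <;> nlinarith
      rw [hset, expMeasure_Ioi (by positivity)
          (div_nonneg (mul_nonneg hx hd.le) (by positivity)),
        ← ENNReal.ofReal_mul (exp_pos _).le, ← exp_add]
      congr 1
      rw [hcLap]
      field_simp
      ring
    rw [hinner, lintegral_const_mul _ (by fun_prop : Measurable fun v : ℝ => ENNReal.ofReal (rexp (-(cLap * v)))),
      expMeasure_laplace (by positivity) hcLap0]
  -- combine
  have hcomplval : ℙ {ω | Y ω ≤ x}ᶜ = ENNReal.ofReal (E1 * L * E3) := by
    rw [hcompl, indepFun_iff_measure_inter_preimage_eq_mul.mp hpairW s _ hs measurableSet_Ioi,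
      hA, hB, ENNReal.ofReal_mul (by positivity), ENNReal.ofReal_mul (exp_pos _).le]
  have hq0 : 0 ≤ E1 * L * E3 := by positivity
  have hEq : ℙ {ω | Y ω ≤ x} = 1 - ENNReal.ofReal (E1 * L * E3) := by
    have hsum := measure_add_measure_compl (μ := (ℙ : Measure α)) hmeasY
    rw [hcomplval, measure_univ] at hsum
    exact ENNReal.eq_sub_of_add_eq ENNReal.ofReal_ne_top hsum
  have hle : ENNReal.ofReal (E1 * L * E3) ≤ 1 := by
    rw [← hcomplval]; exact prob_le_one
  rw [hEq, ENNReal.toReal_sub_of_le hle ENNReal.one_ne_top, ENNReal.toReal_one,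
    ENNReal.toReal_ofReal hq0]
  -- final real arithmetic
  have hLval : L = P_S * Ω_SR / (P_S * Ω_SR + k * P_R * Ω_RR * x) := by
    rw [hL, hcLap]
    have hden : 0 < P_S * Ω_SR + k * P_R * Ω_RR * x := by positivity
    field_simp
  congr 1
  rw [hLval, mul_comm E1, mul_assoc]
  congr 1
  rw [hE1, hE3, ← exp_add]
  congr 1
  field_simp
  ring
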